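/- arXiv:1406.6601 — 4 statements merged into one kernel-verified Lean document; each statement's English description precedes it below -/
import Mathlib

section
/- Let Ω ⊆ ℝⁿ be closed convex, f convex and continuously differentiable, x ∈ Ω, x̂ ∈ Ω, α > 0, D symmetric positive definite, and y the minimizer over Ω of ∇f(x)ᵀ(z−x) + (1/(2α))(z−x)ᵀD⁻¹(z−x). Then (y−x)ᵀD⁻¹(x̂−x) ≥ α(f(x)−f(x̂)) + ‖y−x‖²_{D⁻¹} + α∇f(x)ᵀ(y−x). -/
open RealInnerProductSpace Matrix
open Topology

theorem stmt11 {n : ℕ} (Ω : Set (EuclideanSpace ℝ (Fin n)))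
    (hΩc : IsClosed Ω) (hΩconv : Convex ℝ Ω)
    (f : EuclideanSpace ℝ (Fin n) → ℝ) (hf : ContDiff ℝ 1 f)
    (hconv : ConvexOn ℝ Ω f)
    (x : EuclideanSpace ℝ (Fin n)) (hx : x ∈ Ω)
    (xhat : EuclideanSpace ℝ (Fin n)) (hxhat : xhat ∈ Ω)
    (α : ℝ) (hα : 0 < α)
    (D : Matrix (Fin n) (Fin n) ℝ) (hD : D.IsHermitian) (hPD : D.PosDef)
    (y : EuclideanSpace ℝ (Fin n)) (hy : y ∈ Ω)
    (hmin : ∀ z ∈ Ω,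
      ⟪gradient f x, y - x⟫ + 1 / (2 * α) * ⟪y - x, toEuclideanLin D⁻¹ (y - x)⟫ ≤
        ⟪gradient f x, z - x⟫ + 1 / (2 * α) * ⟪z - x, toEuclideanLin D⁻¹ (z - x)⟫) :
    α * (f x - f xhat) + ⟪y - x, toEuclideanLin D⁻¹ (y - x)⟫
        + α * ⟪gradient f x, y - x⟫ ≤
      ⟪y - x, toEuclideanLin D⁻¹ (xhat - x)⟫ := by
  set g := gradient f x with hg
  set B := toEuclideanLin D⁻¹ with hB
  set u := y - x with hu
  set w := xhat - y with hw
  have hdiff : DifferentiableAt ℝ f x := (hf.differentiable one_ne_zero).differentiableAt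
  -- gradient = fderiv pairing
  have hgrad : ∀ v, ⟪g, v⟫ = fderiv ℝ f x v := fun v => by
    rw [hg, gradient, InnerProductSpace.toDual_symm_apply]
  -- symmetry of B
  have hBsym : ∀ p q : EuclideanSpace ℝ (Fin n), ⟪p, B q⟫ = ⟪q, B p⟫ := by
    intro p q
    have hsym := Matrix.isHermitian_iff_isSymmetric.mp hPD.inv.isHermitian
    rw [← hsym p q, real_inner_comm]
  -- Step 1: convexity gradient inequality  ⟪g, xhat - x⟫ ≤ f xhat - f x
  have hgradineq : ⟪g, xhat - x⟫ ≤ f xhat - f x := by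
    set v := xhat - x with hv
    set φ : ℝ → ℝ := fun t => f (x + t • v) with hφ
    have hline : HasDerivAt (fun t : ℝ => x + t • v) v 0 := by
      simpa using ((hasDerivAt_id (0:ℝ)).smul_const v).const_add x
    have hφd : HasDerivAt φ (fderiv ℝ f x v) 0 := by
      have h0 : HasFDerivAt f (fderiv ℝ f x) (x + (0:ℝ) • v) := by
        simpa using hdiff.hasFDerivAt
      exact h0.comp_hasDerivAt 0 hline
    have hslope : Filter.Tendsto (slope φ 0) (𝓝[>] (0:ℝ)) (𝓝 (fderiv ℝ f x v)) :=
      (hasDerivAt_iff_tendsto_slope.mp hφd).mono_left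
        (nhdsWithin_mono _ fun t ht => ne_of_gt ht)
    have hineq : ∀ᶠ t in 𝓝[>] (0:ℝ), slope φ 0 t ≤ f xhat - f x := by
      filter_upwards [Ioc_mem_nhdsGT_of_mem (by norm_num : (0:ℝ) ∈ Set.Ico (0:ℝ) 1)]
        with t ht
      have hcomb : x + t • v = (1 - t) • x + t • xhat := by
        rw [hv]; module
      have hconvt := hconv.2 hx hxhat (by linarith [ht.2] : (0:ℝ) ≤ 1 - t)
        (le_of_lt ht.1) (by ring)
      rw [slope_def_field]
      have hφt : φ t ≤ (1 - t) * f x + t * f xhat := by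
        rw [hφ]; simp only [hcomb]; simpa [smul_eq_mul] using hconvt
      have hφ0 : φ 0 = f x := by simp [hφ]
      rw [div_le_iff₀ (by simpa using ht.1)]
      rw [hφ0]
      nlinarith [ht.1, hφt]
    have := le_of_tendsto hslope hineq
    rw [hgrad]; exact this
  -- Step 2: variational inequality from hmin
  have key : ∀ t ∈ Set.Ioc (0:ℝ) 1,
      0 ≤ ⟪g, w⟫ + ⟪u, B w⟫ / α + t * (⟪w, B w⟫ / (2 * α)) := by
    intro t ht
    have hz : y + t • w ∈ Ω := by
      have hcomb : y + t • w = (1 - t) • y + t • xhat := by rw [hw]; module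
      rw [hcomb]
      exact hΩconv hy hxhat (by linarith [ht.2]) (le_of_lt ht.1) (by ring)
    have h := hmin _ hz
    have hz2 : y + t • w - x = u + t • w := by rw [hu]; module
    rw [hz2] at h
    simp only [inner_add_left, inner_add_right, _root_.map_add, _root_.map_smul,
      real_inner_smul_left, real_inner_smul_right] at h
    rw [show ⟪w, B u⟫ = ⟪u, B w⟫ from hBsym w u] at h
    set a := ⟪g, w⟫
    set b := ⟪u, B w⟫
    set c := ⟪w, B w⟫
    have ht0 := ht.1
    have h0 : 0 ≤ t * a + 1 / (2 * α) * (2 * t * b + t * t * c) := by linarith [h]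
    have expand : a + b / α + t * (c / (2 * α))
        = (1 / t) * (t * a + 1 / (2 * α) * (2 * t * b + t * t * c)) := by
      field_simp
      ring
    rw [expand]
    exact mul_nonneg (by positivity) h0
  have key2 : 0 ≤ ⟪g, w⟫ + ⟪u, B w⟫ / α := by
    have hcont : Filter.Tendsto (fun t : ℝ => ⟪g, w⟫ + ⟪u, B w⟫ / α + t * (⟪w, B w⟫ / (2 * α)))
        (𝓝[>] (0:ℝ)) (𝓝 (⟪g, w⟫ + ⟪u, B w⟫ / α + 0 * (⟪w, B w⟫ / (2 * α)))) := by
      apply Filter.Tendsto.mono_left _ nhdsWithin_le_nhds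
      exact (Continuous.tendsto (by fun_prop) 0)
    rw [zero_mul, add_zero] at hcont
    refine ge_of_tendsto hcont ?_
    filter_upwards [Ioc_mem_nhdsGT_of_mem (by norm_num : (0:ℝ) ∈ Set.Ico (0:ℝ) 1)]
      with t ht using key t ht
  -- Step 3: combine
  have hxw : xhat - x = u + w := by rw [hu, hw]; module
  rw [hxw, map_add, inner_add_right]
  have hgxw : ⟪g, u + w⟫ = ⟪g, u⟫ + ⟪g, w⟫ := inner_add_right _ _ _
  rw [hxw, hgxw] at hgradineq
  have hmul : 0 ≤ α * ⟪g, w⟫ + ⟪u, B w⟫ := by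
    have := mul_le_mul_of_nonneg_left key2 (le_of_lt hα)
    rw [mul_zero] at this
    calc (0:ℝ) ≤ α * (⟪g, w⟫ + ⟪u, B w⟫ / α) := this
      _ = α * ⟪g, w⟫ + ⟪u, B w⟫ := by field_simp
  nlinarith [mul_le_mul_of_nonneg_left hgradineq (le_of_lt hα)]
end

section
/- In the setting above with x⁺ = x + λ(y−x), λ ∈ (0,1], and x̂ a minimizer of f over Ω, one has ‖x⁺ − x̂‖²_{D⁻¹} ≤ ‖x − x̂‖²_{D⁻¹} − 2αλ∇f(x)ᵀ(y−x) − 2λα(f(x) − f(x̂)). -/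
open RealInnerProductSpace Matrix

set_option maxHeartbeats 1000000

private lemma aux_nonneg (A K : ℝ) (hK : 0 ≤ K)
    (h : ∀ t ∈ Set.Ioc (0:ℝ) 1, 0 ≤ A + t * K) : 0 ≤ A := by
  by_contra hA
  push_neg at hA
  set t : ℝ := min 1 ((-A) / (2 * (K + 1))) with ht
  have htpos : 0 < t := lt_min one_pos (div_pos (by linarith) (by linarith))
  have h1 := h t ⟨htpos, min_le_left _ _⟩
  have h2 : t ≤ (-A) / (2 * (K + 1)) := min_le_right _ _
  have hK1 : (0:ℝ) < 2 * (K + 1) := by linarith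
  have h3 : t * K ≤ ((-A) / (2 * (K + 1))) * K :=
    mul_le_mul_of_nonneg_right h2 hK
  have h4 : ((-A) / (2 * (K + 1))) * K < -A := by
    rw [div_mul_eq_mul_div, div_lt_iff₀ hK1]
    nlinarith
  linarith

theorem stmt12 {n : ℕ} (Ω : Set (EuclideanSpace ℝ (Fin n)))
    (hΩc : IsClosed Ω) (hΩconv : Convex ℝ Ω)
    (f : EuclideanSpace ℝ (Fin n) → ℝ) (hf : ContDiff ℝ 1 f)
    (hconv : ConvexOn ℝ Ω f)
    (x : EuclideanSpace ℝ (Fin n)) (hx : x ∈ Ω)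
    (xhat : EuclideanSpace ℝ (Fin n)) (hxhat : xhat ∈ Ω)
    (hminf : ∀ z ∈ Ω, f xhat ≤ f z)
    (α : ℝ) (hα : 0 < α)
    (D : Matrix (Fin n) (Fin n) ℝ) (hD : D.IsHermitian) (hPD : D.PosDef)
    (y : EuclideanSpace ℝ (Fin n)) (hy : y ∈ Ω)
    (hmin : ∀ z ∈ Ω,
      ⟪gradient f x, y - x⟫ + 1 / (2 * α) * ⟪y - x, toEuclideanLin D⁻¹ (y - x)⟫ ≤
        ⟪gradient f x, z - x⟫ + 1 / (2 * α) * ⟪z - x, toEuclideanLin D⁻¹ (z - x)⟫)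
    (lam : ℝ) (hlam : lam ∈ Set.Ioc (0 : ℝ) 1) :
    ⟪x + lam • (y - x) - xhat, toEuclideanLin D⁻¹ (x + lam • (y - x) - xhat)⟫ ≤
      ⟪x - xhat, toEuclideanLin D⁻¹ (x - xhat)⟫
        - 2 * α * lam * ⟪gradient f x, y - x⟫ - 2 * lam * α * (f x - f xhat) := by
  set g : EuclideanSpace ℝ (Fin n) := gradient f x with hg
  set T : EuclideanSpace ℝ (Fin n) →ₗ[ℝ] EuclideanSpace ℝ (Fin n) := toEuclideanLin D⁻¹ with hT
  -- symmetry of T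
  have hsym : ∀ u v : EuclideanSpace ℝ (Fin n), ⟪T u, v⟫ = ⟪u, T v⟫ :=
    Matrix.isHermitian_iff_isSymmetric.mp hD.inv
  have hsym' : ∀ u v : EuclideanSpace ℝ (Fin n), ⟪u, T v⟫ = ⟪v, T u⟫ := by
    intro u v
    rw [← hsym u v, real_inner_comm]
  -- positivity of T
  have hpos : ∀ v : EuclideanSpace ℝ (Fin n), 0 ≤ ⟪v, T v⟫ := by
    intro v
    have h := hPD.inv.posSemidef.dotProduct_mulVec_nonneg (WithLp.equiv 2 (Fin n → ℝ) v)
    simpa [hT, EuclideanSpace.inner_eq_star_dotProduct,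
      Matrix.toEuclideanLin_apply, dotProduct_comm (D⁻¹ *ᵥ _)] using h
  -- quadratic expansion
  have hexp : ∀ (u v : EuclideanSpace ℝ (Fin n)) (t : ℝ), ⟪u + t • v, T (u + t • v)⟫ =
      ⟪u, T u⟫ + 2 * t * ⟪u, T v⟫ + t ^ 2 * ⟪v, T v⟫ := by
    intro u v t
    have hms : T (t • v) = t • T v := T.map_smul t v
    rw [map_add, hms]
    simp only [inner_add_left, inner_add_right, real_inner_smul_left, real_inner_smul_right]
    rw [hsym' v u]
    ring
  -- gradient inequality from convexity: ⟪g, xhat - x⟫ ≤ f xhat - f x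
  have hgrad : ⟪g, xhat - x⟫ ≤ f xhat - f x := by
    set d : EuclideanSpace ℝ (Fin n) := xhat - x with hd
    have hdiff : HasGradientAt f g x := by
      rw [hg]; exact ((hf.differentiable one_ne_zero) x).hasGradientAt
    have hfd : HasFDerivAt f ((InnerProductSpace.toDual ℝ _) g) x :=
      hasGradientAt_iff_hasFDerivAt.mp hdiff
    have hline : HasDerivAt (fun t : ℝ => x + t • d) d 0 := by
      simpa using ((hasDerivAt_id (0:ℝ)).smul_const d).const_add x
    have hfd' : HasFDerivAt f ((InnerProductSpace.toDual ℝ _) g) ((fun t : ℝ => x + t • d) 0) := by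
      simpa using hfd
    have hcomp : HasDerivAt (fun t : ℝ => f (x + t • d)) ⟪g, d⟫ 0 := by
      have := hfd'.comp_hasDerivAt 0 hline
      exact this
    -- slope inequality
    have hslope : ∀ t ∈ Set.Ioc (0:ℝ) 1,
        (f (x + t • d) - f x) / t ≤ f xhat - f x := by
      intro t ht
      have hcv := hconv.2 hx hxhat (by linarith [ht.2] : (0:ℝ) ≤ 1 - t) ht.1.le
        (by ring : (1 - t) + t = 1)
      have heq : (1 - t) • x + t • xhat = x + t • d := by
        rw [hd]; module
      rw [heq] at hcv
      rw [div_le_iff₀ ht.1]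
      simp only [smul_eq_mul] at hcv
      nlinarith [hcv]
    -- take limit of slopes
    have htend : Filter.Tendsto (fun t : ℝ => (f (x + t • d) - f x) / t)
        (nhdsWithin 0 (Set.Ioi 0)) (nhds ⟪g, d⟫) := by
      have h1 := hcomp.hasDerivWithinAt (s := Set.Ioi (0:ℝ))
      have h2 := hasDerivWithinAt_iff_tendsto_slope.mp h1
      have hsub : nhdsWithin (0:ℝ) (Set.Ioi 0 \ {0}) = nhdsWithin 0 (Set.Ioi 0) := by
        congr 1
        ext t
        simp only [Set.mem_diff, Set.mem_Ioi, Set.mem_singleton_iff]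
        exact ⟨fun h => h.1, fun h => ⟨h, ne_of_gt h⟩⟩
      rw [hsub] at h2
      refine h2.congr' ?_
      filter_upwards [self_mem_nhdsWithin] with t ht
      simp only [slope_def_field, zero_smul, add_zero, div_eq_inv_mul]
      ring
    refine le_of_tendsto htend ?_
    filter_upwards [Ioc_mem_nhdsGT_of_mem (Set.mem_Ico.mpr ⟨le_rfl, one_pos⟩)] with t ht
    exact hslope t ht
  -- variational inequality from hmin
  set u : EuclideanSpace ℝ (Fin n) := y - x with hu
  set e : EuclideanSpace ℝ (Fin n) := xhat - y with he
  have hVI : 0 ≤ ⟪g, e⟫ + 2 * (1 / (2 * α)) * ⟪u, T e⟫ := by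
    apply aux_nonneg _ ((1 / (2 * α)) * ⟪e, T e⟫)
      (mul_nonneg (by positivity) (hpos e))
    intro t ht
    have hmem : (1 - t) • y + t • xhat ∈ Ω := hΩconv hy hxhat (by linarith [ht.2])
      ht.1.le (by ring)
    have heq : (1 - t) • y + t • xhat - x = u + t • e := by
      rw [hu, he]; module
    have h1 := hmin _ hmem
    rw [heq, hexp u e t] at h1
    have h2 : ⟪g, u + t • e⟫ = ⟪g, u⟫ + t * ⟪g, e⟫ := by
      rw [inner_add_right, real_inner_smul_right]
    rw [h2] at h1
    have hc : 0 < 1 / (2 * α) := by positivity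
    have h4 : 0 ≤ t * (⟪g, e⟫ + 2 * (1 / (2 * α)) * ⟪u, T e⟫ + t * (1 / (2 * α) * ⟪e, T e⟫)) := by
      nlinarith [h1]
    have h5 := (mul_nonneg_iff_of_pos_left ht.1).mp h4
    linarith
  -- now the main estimate
  set w : EuclideanSpace ℝ (Fin n) := x - xhat with hw
  have hwe : x + lam • (y - x) - xhat = w + lam • u := by
    rw [hw, hu]; module
  rw [hwe, hexp w u lam]
  have hweu : w = -u + (-1 : ℝ) • e := by rw [hw, hu, he]; module
  have hcross : ⟪w, T u⟫ = -⟪u, T u⟫ - ⟪e, T u⟫ := by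
    rw [hweu, inner_add_left, inner_neg_left, real_inner_smul_left]
    ring
  have hsymeu : ⟪e, T u⟫ = ⟪u, T e⟫ := hsym' e u
  have hge : ⟪g, e⟫ = ⟪g, xhat - x⟫ - ⟪g, u⟫ := by
    rw [hu, he, ← inner_sub_right]
    congr 1
    abel
  have hVI' : -α * ⟪g, e⟫ ≤ ⟪u, T e⟫ := by
    have hr : 2 * (1 / (2 * α)) = 1 / α := by field_simp
    rw [hr] at hVI
    have h5 : 0 ≤ α * ⟪g, e⟫ + α * ((1/α) * ⟪u, T e⟫) := by nlinarith [hVI]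
    have h6 : α * ((1/α) * ⟪u, T e⟫) = ⟪u, T e⟫ := by field_simp
    linarith [h5, h6.symm.le]
  have hqu : 0 ≤ ⟪u, T u⟫ := hpos u
  have hlam1 : 0 < lam := hlam.1
  have hlam2 : lam ≤ 1 := hlam.2
  -- combine
  have key : 2 * lam * ⟪w, T u⟫ + lam ^ 2 * ⟪u, T u⟫ ≤
      -2 * α * lam * ⟪g, u⟫ - 2 * lam * α * (f x - f xhat) := by
    rw [hcross, hsymeu]
    have h8 : ⟪g, e⟫ ≤ (f xhat - f x) - ⟪g, u⟫ := by
      rw [hge]; linarith [hgrad]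
    have A0 : 0 ≤ lam * ⟪u, T u⟫ := mul_nonneg hlam1.le hqu
    have A1 : lam ^ 2 * ⟪u, T u⟫ ≤ lam * ⟪u, T u⟫ := by nlinarith [hqu]
    have A2 : 2 * lam * (-α * ⟪g, e⟫) ≤ 2 * lam * ⟪u, T e⟫ :=
      mul_le_mul_of_nonneg_left hVI' (by linarith)
    have A3 : 2 * α * lam * ⟪g, e⟫ ≤ 2 * α * lam * ((f xhat - f x) - ⟪g, u⟫) :=
      mul_le_mul_of_nonneg_left h8 (by positivity)
    linarith [A0, A1, A2, A3]
  linarith [key]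
end

section
/- Let {a_k} be a nonnegative sequence with a_{k+1} ≤ μ_k² a_k + c_k where μ_k ≥ 1, ∏ μ_j² bounded by M, c_k ≥ 0, ∑ c_k < ∞. If {a_k} has a subsequence converging to 0, then a_k → 0. -/
open Filter

theorem stmt15 (a μ c : ℕ → ℝ) (M : ℝ)
    (ha : ∀ k, 0 ≤ a k) (hμ : ∀ k, 1 ≤ μ k)
    (hprod : ∀ k, ∏ j ∈ Finset.range (k + 1), μ j ^ 2 ≤ M)
    (hc : ∀ k, 0 ≤ c k) (hcsum : Summable c)
    (hrec : ∀ k, a (k + 1) ≤ μ k ^ 2 * a k + c k)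
    (φ : ℕ → ℕ) (hφ : StrictMono φ)
    (hsub : Tendsto (a ∘ φ) atTop (nhds 0)) :
    Tendsto a atTop (nhds 0) := by
  set P : ℕ → ℝ := fun k => ∏ j ∈ Finset.range k, μ j ^ 2 with hPdef
  have hP1 : ∀ k, (1:ℝ) ≤ P k := by
    intro k
    show (1:ℝ) ≤ ∏ j ∈ Finset.range k, μ j ^ 2
    induction k with
    | zero => simp
    | succ n ih =>
      rw [Finset.prod_range_succ]
      nlinarith [one_le_pow₀ (hμ n) (n := 2)]
  have hPpos : ∀ k, (0:ℝ) < P k := fun k => lt_of_lt_of_le one_pos (hP1 k)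
  have hPM : ∀ k, P k ≤ M := by
    intro k
    cases k with
    | zero =>
      have h1 : P 1 ≤ M := hprod 0
      calc P 0 ≤ P 1 := by simpa [hPdef] using hP1 1
        _ ≤ M := h1
    | succ n => exact hprod n
  have hM1 : (1:ℝ) ≤ M := le_trans (hP1 0) (hPM 0)
  have hMpos : (0:ℝ) < M := lt_of_lt_of_le one_pos hM1
  -- quotient sequence
  have hb : ∀ m k, m ≤ k → a k / P k ≤ a m / P m + ∑ j ∈ Finset.Ico m k, c j := by
    intro m k hmk
    induction k, hmk using Nat.le_induction with
    | base => simp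
    | succ k hmk ih =>
      have hPsucc : P (k + 1) = P k * μ k ^ 2 := Finset.prod_range_succ _ _
      have h1 : a (k + 1) / P (k + 1) ≤ (μ k ^ 2 * a k + c k) / P (k + 1) := by
        gcongr
        exact hrec k
      have hμpos : (0:ℝ) < μ k := lt_of_lt_of_le one_pos (hμ k)
      have h2 : (μ k ^ 2 * a k + c k) / P (k + 1) = a k / P k + c k / P (k + 1) := by
        rw [hPsucc]
        have h4 : P k ≠ 0 := (hPpos k).ne'
        have h5 : μ k ≠ 0 := hμpos.ne'
        field_simp
      have h3 : c k / P (k + 1) ≤ c k := div_le_self (hc k) (hP1 (k + 1))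
      rw [Finset.sum_Ico_succ_top hmk]
      calc a (k + 1) / P (k + 1) ≤ a k / P k + c k / P (k + 1) := by rw [← h2]; exact h1
        _ ≤ (a m / P m + ∑ j ∈ Finset.Ico m k, c j) + c k := by
            exact add_le_add ih h3
        _ = a m / P m + (∑ j ∈ Finset.Ico m k, c j + c k) := by ring
  have key : ∀ m k, m ≤ k → a k ≤ M * a m + M * ∑ j ∈ Finset.Ico m k, c j := by
    intro m k hmk
    have h0 : a k = P k * (a k / P k) := by
      rw [mul_comm, div_mul_cancel₀ _ (hPpos k).ne']
    have hq : 0 ≤ a k / P k := div_nonneg (ha k) (hPpos k).le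
    have hsum : 0 ≤ ∑ j ∈ Finset.Ico m k, c j :=
      Finset.sum_nonneg fun j _ => hc j
    calc a k = P k * (a k / P k) := h0
      _ ≤ M * (a k / P k) := by gcongr; exact hPM k
      _ ≤ M * (a m / P m + ∑ j ∈ Finset.Ico m k, c j) := by
          gcongr
          exact hb m k hmk
      _ ≤ M * (a m + ∑ j ∈ Finset.Ico m k, c j) := by
          gcongr
          exact div_le_self (ha m) (hP1 m)
      _ = M * a m + M * ∑ j ∈ Finset.Ico m k, c j := by ring
  -- tails of c
  have htail : Tendsto (fun n => ∑' l, c (l + n)) atTop (nhds 0) :=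
    tendsto_sum_nat_add c
  rw [Metric.tendsto_atTop]
  intro ε hε
  have hε2 : 0 < ε / (2 * M) := by positivity
  have h1 : ∀ᶠ i in atTop, a (φ i) < ε / (2 * M) := by
    have := hsub.eventually_lt_const hε2
    simpa using this
  have h2 : ∀ᶠ n in atTop, (∑' l, c (l + n)) < ε / (2 * M) :=
    htail.eventually_lt_const hε2
  obtain ⟨N1, hN1⟩ := h1.exists_forall_of_atTop
  obtain ⟨N2, hN2⟩ := h2.exists_forall_of_atTop
  set i := max N1 N2 with hi
  refine ⟨φ i, fun k hk => ?_⟩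
  have hai : a (φ i) < ε / (2 * M) := hN1 i (le_max_left _ _)
  have hφi : N2 ≤ φ i := le_trans (le_max_right N1 N2) (hφ.le_apply)
  have htaili : (∑' l, c (l + φ i)) < ε / (2 * M) := hN2 (φ i) hφi
  have hsumle : ∑ j ∈ Finset.Ico (φ i) k, c j ≤ ∑' l, c (l + φ i) := by
    rw [Finset.sum_Ico_eq_sum_range]
    have hsummable : Summable (fun l => c (l + φ i)) :=
      (summable_nat_add_iff (φ i)).2 hcsum
    have := Summable.sum_le_tsum (Finset.range (k - φ i))
      (fun l _ => hc (l + φ i)) hsummable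
    calc ∑ j ∈ Finset.range (k - φ i), c (φ i + j)
        = ∑ j ∈ Finset.range (k - φ i), c (j + φ i) := by
          apply Finset.sum_congr rfl; intro j _; rw [add_comm]
      _ ≤ ∑' l, c (l + φ i) := this
  have hak : a k ≤ M * a (φ i) + M * ∑ j ∈ Finset.Ico (φ i) k, c j := key _ _ hk
  have : a k < ε := by
    calc a k ≤ M * a (φ i) + M * ∑ j ∈ Finset.Ico (φ i) k, c j := hak
      _ ≤ M * a (φ i) + M * (∑' l, c (l + φ i)) := by gcongr
      _ < M * (ε / (2 * M)) + M * (ε / (2 * M)) :=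
          add_lt_add (mul_lt_mul_of_pos_left hai hMpos)
            (mul_lt_mul_of_pos_left htaili hMpos)
      _ = ε := by field_simp; ring
  rw [Real.dist_eq, sub_zero, abs_of_nonneg (ha k)]
  exact this
end

section
/- Let f : Ω → ℝ be convex with minimizer x̂ and minimum f*. Suppose a sequence {x^{(k)}} ⊆ Ω satisfies, for constants M ≥ 1, a > 0, C ≥ 0 and all k: ‖x^{(k+1)} − x̂‖² ≤ M‖x^{(0)} − x̂‖² + C + a((k+1)f* − ∑_{j=0}^k f(x^{(j)})), and f(x^{(k+1)}) ≤ f(x^{(k)}). Then f(x^{(k+1)}) − f* ≤ (M‖x^{(0)} − x̂‖² + C + a(f(x^{(0)}) − f*))/(a k) for all k ≥ 1; i.e., f(x^{(k)}) − f* = O(1/k). -/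
theorem stmt16 {n : ℕ} (Ω : Set (EuclideanSpace ℝ (Fin n)))
    (f : EuclideanSpace ℝ (Fin n) → ℝ) (hconv : ConvexOn ℝ Ω f)
    (xhat : EuclideanSpace ℝ (Fin n)) (hxhat : xhat ∈ Ω)
    (hminf : ∀ z ∈ Ω, f xhat ≤ f z)
    (x : ℕ → EuclideanSpace ℝ (Fin n)) (hx : ∀ k, x k ∈ Ω)
    (M a C : ℝ) (hM : 1 ≤ M) (ha : 0 < a) (hC : 0 ≤ C)
    (hineq : ∀ k, ‖x (k + 1) - xhat‖ ^ 2 ≤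
      M * ‖x 0 - xhat‖ ^ 2 + C +
        a * ((k + 1 : ℝ) * f xhat - ∑ j ∈ Finset.range (k + 1), f (x j)))
    (hmono : ∀ k, f (x (k + 1)) ≤ f (x k)) :
    ∀ k : ℕ, 1 ≤ k →
      f (x (k + 1)) - f xhat ≤
        (M * ‖x 0 - xhat‖ ^ 2 + C + a * (f (x 0) - f xhat)) / (a * k) := by
  have hanti : Antitone (fun k => f (x k)) := antitone_nat_of_succ_le hmono
  intro k hk
  have hk' : (0 : ℝ) < k := by exact_mod_cast hk
  have hnn : (0 : ℝ) ≤ ‖x (k + 1) - xhat‖ ^ 2 := sq_nonneg _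
  have h1 := hineq k
  have hsum : (k : ℝ) * f (x (k + 1)) + f (x 0) ≤
      ∑ j ∈ Finset.range (k + 1), f (x j) := by
    rw [Finset.sum_range_succ']
    have h2 : ∑ j ∈ Finset.range k, f (x (k + 1)) ≤
        ∑ j ∈ Finset.range k, f (x (j + 1)) := by
      apply Finset.sum_le_sum
      intro j hj
      exact hanti (Nat.succ_le_succ (Finset.mem_range.mp hj).le)
    simp only [Finset.sum_const, Finset.card_range, nsmul_eq_mul] at h2
    linarith [h2]
  have h0 : f xhat ≤ f (x 0) := hminf _ (hx 0)
  rw [le_div_iff₀ (by positivity : (0 : ℝ) < a * k)]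
  nlinarith [h1, hsum, hnn]
end
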